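/- Let σ be a noncrossing partition of {1,…,n} and let u₁,…,u_n be unitaries in a *-algebra such that along each block of σ (read in increasing order) the product of the corresponding unitaries reduces to 1 via the alternating pattern u u* u u* … (each block has even size and the product over each block equals 1, with inner blocks forming contiguous subproducts after removal of deeper blocks). Then the full product u₁u₂⋯u_n equals 1. -/

import Mathlib

open scoped Classical

lemma altProd {A : Type*} [Monoid A] [StarMul A] (v : A) (hv : v * star v = 1) :
    ∀ (l : List A), (∀ k (hk : k < l.length), l.get ⟨k, hk⟩ = (if k % 2 = 0 then v else star v)) →
    l.length % 2 = 0 → l.prod = 1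
  | [], _, _ => rfl
  | [a], _, h => by simp at h
  | a :: b :: t, hget, h => by
      have ha : a = v := by simpa using hget 0 (by simp)
      have hb : b = star v := by simpa using hget 1 (by simp)
      have ht : t.prod = 1 := altProd v hv t
        (fun k hk => by simpa [Nat.add_mod_right] using hget (k+2) (by simpa using Nat.add_lt_add_right hk 2))
        (by simpa [Nat.succ_mod_two_eq_zero_iff, Nat.succ_mod_two_eq_one_iff] using h)
      simp [ha, hb, ht, ← mul_assoc, hv]

lemma sort_split {α : Type*} [LinearOrder α] {S P C Q : Finset α}
    (hPC : ∀ p ∈ P, ∀ c ∈ C, p < c) (hCQ : ∀ c ∈ C, ∀ q ∈ Q, c < q)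
    (hPQ : ∀ p ∈ P, ∀ q ∈ Q, p < q)
    (hmem : ∀ x, x ∈ S ↔ x ∈ P ∨ x ∈ C ∨ x ∈ Q) :
    S.sort (· ≤ ·) = (P.sort (· ≤ ·) ++ C.sort (· ≤ ·)) ++ Q.sort (· ≤ ·) := by
  classical
  have hnodup : ((P.sort (· ≤ ·) ++ C.sort (· ≤ ·)) ++ Q.sort (· ≤ ·)).Nodup := by
    refine List.nodup_append.2 ⟨List.nodup_append.2
      ⟨Finset.sort_nodup _ _, Finset.sort_nodup _ _, ?_⟩, Finset.sort_nodup _ _, ?_⟩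
    · intro x hx y hx' hxy; subst hxy
      exact lt_irrefl x (hPC x ((Finset.mem_sort _).1 hx) x ((Finset.mem_sort _).1 hx'))
    · intro x hx y hx' hxy; subst hxy
      rcases List.mem_append.1 hx with hx | hx
      · exact lt_irrefl x (hPQ x ((Finset.mem_sort _).1 hx) x ((Finset.mem_sort _).1 hx'))
      · exact lt_irrefl x (hCQ x ((Finset.mem_sort _).1 hx) x ((Finset.mem_sort _).1 hx'))
  refine (List.perm_of_nodup_nodup_toFinset_eq (Finset.sort_nodup _ _) hnodup ?_).eq_of_pairwise'
    (Finset.pairwise_sort _ _) ?_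
  · ext x
    simp [hmem x, or_assoc]
  · refine List.pairwise_append.2 ⟨List.pairwise_append.2
      ⟨Finset.pairwise_sort _ _, Finset.pairwise_sort _ _, ?_⟩, Finset.pairwise_sort _ _, ?_⟩
    · intro x hx y hy
      exact le_of_lt (hPC x ((Finset.mem_sort _).1 hx) y ((Finset.mem_sort _).1 hy))
    · intro x hx y hy
      rcases List.mem_append.1 hx with hx | hx
      · exact le_of_lt (hPQ x ((Finset.mem_sort _).1 hx) y ((Finset.mem_sort _).1 hy))
      · exact le_of_lt (hCQ x ((Finset.mem_sort _).1 hx) y ((Finset.mem_sort _).1 hy))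

/-- Let `σ` be a noncrossing partition of `{1,…,n}` and `u₁,…,u_n` unitaries in
a *-monoid such that along each block of `σ`, read in increasing order, the
entries follow the alternating pattern `v, v*, v, v*, …` for a single unitary
`v` (in particular each block has even size).  Then `u₁ u₂ ⋯ u_n = 1`. -/
theorem prod_eq_one_of_noncrossing_alternating
    {A : Type*} [Monoid A] [StarMul A] (n : ℕ) (σ : Setoid (Fin n))
    (u : Fin n → A)
    (hnc : ¬ ∃ i ii j jj : Fin n, i < ii ∧ ii < j ∧ j < jj ∧
      σ.r i j ∧ σ.r ii jj ∧ ¬ σ.r i ii)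
    (hblocks : ∀ i : Fin n, ∃ v : A,
      star v * v = 1 ∧ v * star v = 1 ∧
      (let l := (Finset.univ.filter (fun j => σ.r i j)).sort (· ≤ ·)
       l.length % 2 = 0 ∧
         ∀ (k : ℕ) (hk : k < l.length),
           u (l.get ⟨k, hk⟩) = if k % 2 = 0 then v else star v)) :
    (List.ofFn u).prod = 1 := by
  classical
  set Cl : Fin n → Finset (Fin n) := fun i => Finset.univ.filter (fun j => σ.r i j) with hCl
  have hmemCl : ∀ i j : Fin n, j ∈ Cl i ↔ σ.r i j := by
    intro i j; simp [hCl]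
  have hClne : ∀ i : Fin n, (Cl i).Nonempty := fun i => ⟨i, (hmemCl i i).2 (σ.refl' i)⟩
  have key : ∀ (m : ℕ) (S : Finset (Fin n)), S.card = m →
      (∀ i ∈ S, ∀ j, σ.r i j → j ∈ S) →
      ((S.sort (· ≤ ·)).map u).prod = 1 := by
    intro m
    induction m using Nat.strong_induction_on with
    | _ m IH =>
      intro S hcard hcl
      rcases S.eq_empty_or_nonempty with rfl | hS
      · simp
      set meas : Fin n → ℕ := fun i =>
        (S.filter (fun x => (Cl i).min' (hClne i) ≤ x ∧ x ≤ (Cl i).max' (hClne i))).card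
        with hmeas
      obtain ⟨i, hiS, hmin⟩ := S.exists_min_image meas hS
      set a := (Cl i).min' (hClne i) with ha
      set b := (Cl i).max' (hClne i) with hb
      have haC : a ∈ Cl i := (Cl i).min'_mem (hClne i)
      have hbC : b ∈ Cl i := (Cl i).max'_mem (hClne i)
      have hCS : Cl i ⊆ S := fun x hx => hcl i hiS x ((hmemCl i x).1 hx)
      have hab : a ≤ b := (Cl i).min'_le b hbC
      have hcont : ∀ x ∈ S, a ≤ x → x ≤ b → x ∈ Cl i := by
        intro x hxS hax hxb
        by_contra hxC
        have hxr : ¬ σ.r i x := fun h => hxC ((hmemCl i x).2 h)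
        have hax' : a < x := lt_of_le_of_ne hax (fun h => hxC (h ▸ haC))
        have hxb' : x < b := lt_of_le_of_ne hxb (fun h => hxC (h ▸ hbC))
        have hria : σ.r i a := (hmemCl i a).1 haC
        have hrib : σ.r i b := (hmemCl i b).1 hbC
        have hrab : σ.r a b := σ.trans' (σ.symm' hria) hrib
        have hbet : ∀ y, σ.r x y → a < y ∧ y < b := by
          intro y hxy
          constructor
          · by_contra hya
            push_neg at hya
            have hya' : y < a := lt_of_le_of_ne hya
              (fun h => hxr (σ.trans' hria (σ.symm' (h ▸ hxy))))
            exact hnc ⟨y, a, x, b, hya', hax', hxb', σ.symm' hxy, hrab,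
              fun h => hxr (σ.trans' hria (σ.symm' (σ.trans' hxy h)))⟩
          · by_contra hby
            push_neg at hby
            have hby' : b < y := lt_of_le_of_ne hby
              (fun h => hxr (σ.trans' hrib (σ.symm' (h ▸ hxy))))
            exact hnc ⟨a, x, b, y, hax', hxb', hby', hrab, hxy,
              fun h => hxr (σ.trans' hria h)⟩
        set c := (Cl x).min' (hClne x) with hc
        set d := (Cl x).max' (hClne x) with hd
        have hcx : σ.r x c := (hmemCl x c).1 ((Cl x).min'_mem (hClne x))
        have hdx : σ.r x d := (hmemCl x d).1 ((Cl x).max'_mem (hClne x))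
        have hac : a < c := (hbet c hcx).1
        have hdb : d < b := (hbet d hdx).2
        have hlt : meas x < meas i := by
          apply Finset.card_lt_card
          constructor
          · intro t ht
            rw [Finset.mem_filter] at ht ⊢
            exact ⟨ht.1, le_of_lt (lt_of_lt_of_le hac ht.2.1),
              le_of_lt (lt_of_le_of_lt ht.2.2 hdb)⟩
          · intro hsub
            have haS : a ∈ S := hCS haC
            have : a ∈ S.filter (fun t => c ≤ t ∧ t ≤ d) :=
              hsub (Finset.mem_filter.2 ⟨haS, le_refl a, hab⟩)
            rw [Finset.mem_filter] at this
            exact absurd this.2.1 (not_le_of_gt hac)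
        exact absurd (hmin x hxS) (not_le_of_gt hlt)
      set P := S.filter (fun x => x < a) with hP
      set Q := S.filter (fun x => b < x) with hQ
      have hPinS : ∀ p ∈ P, p ∈ S ∧ p < a := by
        intro p hp; rw [hP, Finset.mem_filter] at hp; exact hp
      have hQinS : ∀ q ∈ Q, q ∈ S ∧ b < q := by
        intro q hq; rw [hQ, Finset.mem_filter] at hq; exact hq
      have hPC : ∀ p ∈ P, ∀ c ∈ Cl i, p < c := fun p hp c hcC =>
        lt_of_lt_of_le (hPinS p hp).2 ((Cl i).min'_le c hcC)
      have hCQ : ∀ c ∈ Cl i, ∀ q ∈ Q, c < q := fun c hcC q hq =>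
        lt_of_le_of_lt ((Cl i).le_max' c hcC) (hQinS q hq).2
      have hPQ : ∀ p ∈ P, ∀ q ∈ Q, p < q := fun p hp q hq =>
        lt_trans (lt_of_lt_of_le (hPinS p hp).2 hab) (hQinS q hq).2
      have hmem1 : ∀ x, x ∈ S ↔ x ∈ P ∨ x ∈ Cl i ∨ x ∈ Q := by
        intro x
        simp only [hP, hQ, Finset.mem_filter]
        constructor
        · intro hx
          rcases lt_or_ge x a with h | h
          · exact Or.inl ⟨hx, h⟩
          rcases le_or_gt x b with h' | h'
          · exact Or.inr (Or.inl (hcont x hx h h'))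
          · exact Or.inr (Or.inr ⟨hx, h'⟩)
        · rintro (⟨h, _⟩ | h | ⟨h, _⟩)
          · exact h
          · exact hCS h
          · exact h
      have hmem2 : ∀ x, x ∈ S \ Cl i ↔ x ∈ P ∨ x ∈ (∅ : Finset (Fin n)) ∨ x ∈ Q := by
        intro x
        simp only [Finset.mem_sdiff, Finset.notMem_empty, false_or, hP, hQ, Finset.mem_filter]
        constructor
        · rintro ⟨hx, hxC⟩
          rcases lt_or_ge x a with h | h
          · exact Or.inl ⟨hx, h⟩
          rcases le_or_gt x b with h' | h'
          · exact absurd (hcont x hx h h') hxC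
          · exact Or.inr ⟨hx, h'⟩
        · rintro (⟨h, h'⟩ | ⟨h, h'⟩)
          · exact ⟨h, fun hc => absurd h' (not_lt_of_ge ((Cl i).min'_le x hc))⟩
          · exact ⟨h, fun hc => absurd h' (not_lt_of_ge ((Cl i).le_max' x hc))⟩
      have hsortS : S.sort (· ≤ ·) =
          (P.sort (· ≤ ·) ++ (Cl i).sort (· ≤ ·)) ++ Q.sort (· ≤ ·) :=
        sort_split hPC hCQ hPQ hmem1
      have hsortS' : (S \ Cl i).sort (· ≤ ·) = P.sort (· ≤ ·) ++ Q.sort (· ≤ ·) := by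
        have := sort_split (S := S \ Cl i) (C := (∅ : Finset (Fin n)))
          (by simp) (by simp) hPQ hmem2
        simpa using this
      obtain ⟨v, hv1, hv2, heven, halt⟩ := hblocks i
      have hblock : (((Cl i).sort (· ≤ ·)).map u).prod = 1 := by
        apply altProd v hv2
        · intro k hk
          have hk' : k < ((Cl i).sort (· ≤ ·)).length := by simpa using hk
          rw [List.get_eq_getElem, List.getElem_map]
          exact halt k hk'
        · simpa using heven
      have hcl' : ∀ x ∈ S \ Cl i, ∀ j, σ.r x j → j ∈ S \ Cl i := by
        intro x hx j hxj
        rw [Finset.mem_sdiff] at hx ⊢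
        refine ⟨hcl x hx.1 j hxj, fun hj => hx.2 ((hmemCl i x).2 ?_)⟩
        exact σ.trans' ((hmemCl i j).1 hj) (σ.symm' hxj)
      have hss : S \ Cl i ⊂ S := Finset.sdiff_ssubset hCS (hClne i)
      have hcard' : (S \ Cl i).card < m := hcard ▸ Finset.card_lt_card hss
      have hrest : (((S \ Cl i).sort (· ≤ ·)).map u).prod = 1 :=
        IH _ hcard' _ rfl hcl'
      rw [hsortS', List.map_append, List.prod_append] at hrest
      rw [hsortS]
      simp only [List.map_append, List.prod_append, hblock]
      simpa using hrest
  have := key (Finset.univ : Finset (Fin n)).card Finset.univ rfl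
    (fun _ _ j _ => Finset.mem_univ j)
  rw [Fin.sort_univ] at this
  rw [List.ofFn_eq_map]
  exact this
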